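/- Let I ⊆ {1,...,n} with |I| = h be such that |r_i| ≤ |r_j| for all i ∈ I and j ∉ I. Then the vector r* defined by r*_i = r_i/(2γ+1) for i ∈ I and r*_i = r_i for i ∉ I is a minimizer of α ↦ γ·T_h(α) + (1/2)‖α − r‖₂² over R^n. -/
import Mathlib


/-- Trimmed squares function. -/
noncomputable def Th (n h : ℕ) (r : Fin n → ℝ) : ℝ :=
  sInf {s : ℝ | ∃ Λ : Finset (Fin n), Λ.card = h ∧ s = ∑ i ∈ Λ, r i ^ 2}

/-- shrinking the h smallest-magnitude entries gives a minimizer of the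
proximal subproblem of γ·T_h. -/
theorem stmt_2 (n h : ℕ) (hh : 1 ≤ h) (hhn : h ≤ n)
    (γ : ℝ) (hγ : 0 < γ) (r : Fin n → ℝ)
    (I : Finset (Fin n)) (hI : I.card = h)
    (hord : ∀ i ∈ I, ∀ j ∉ I, |r i| ≤ |r j|)
    (rstar : Fin n → ℝ)
    (hrstar : rstar = fun i => if i ∈ I then r i / (2 * γ + 1) else r i) :
    ∀ α : Fin n → ℝ,
      γ * Th n h rstar + (1 / 2) * ∑ i, (rstar i - r i) ^ 2 ≤
        γ * Th n h α + (1 / 2) * ∑ i, (α i - r i) ^ 2 := by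
  intro α
  set c : ℝ := 2 * γ + 1 with hc
  have hcpos : 0 < c := by positivity
  set T : ℝ := ∑ i ∈ I, r i ^ 2 with hT
  have hTnn : 0 ≤ T := Finset.sum_nonneg fun i _ => sq_nonneg _
  set S : ℝ := (γ / c) * T with hS
  -- combinatorial exchange: any Λ of card h has sum of squares ≥ that of I
  have hcomb : ∀ Λ : Finset (Fin n), Λ.card = h → T ≤ ∑ i ∈ Λ, r i ^ 2 := by
    intro Λ hΛ
    have hcard : (I \ Λ).card = (Λ \ I).card := by
      have h1 := Finset.card_sdiff_add_card_inter I Λ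
      have h2 := Finset.card_sdiff_add_card_inter Λ I
      rw [Finset.inter_comm] at h2
      omega
    have hdiff : ∑ i ∈ I \ Λ, r i ^ 2 ≤ ∑ i ∈ Λ \ I, r i ^ 2 := by
      rcases (Λ \ I).eq_empty_or_nonempty with he | hne
      · have : (I \ Λ) = ∅ := Finset.card_eq_zero.mp (by rw [hcard, he]; simp)
        simp [this, he]
      · obtain ⟨j, hjmem, hjmin⟩ := Finset.exists_min_image (Λ \ I) (fun k => r k ^ 2) hne
        have hjnI : j ∉ I := (Finset.mem_sdiff.mp hjmem).2
        have hub : ∀ i ∈ I \ Λ, r i ^ 2 ≤ r j ^ 2 := by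
          intro i hi
          have hiI : i ∈ I := (Finset.mem_sdiff.mp hi).1
          have := hord i hiI j hjnI
          calc r i ^ 2 = |r i| ^ 2 := (sq_abs _).symm
            _ ≤ |r j| ^ 2 := by
                exact pow_le_pow_left₀ (abs_nonneg _) this 2
            _ = r j ^ 2 := sq_abs _
        calc ∑ i ∈ I \ Λ, r i ^ 2 ≤ (I \ Λ).card • (r j ^ 2) :=
              Finset.sum_le_card_nsmul _ _ _ hub
          _ = (Λ \ I).card • (r j ^ 2) := by rw [hcard]
          _ ≤ ∑ i ∈ Λ \ I, r i ^ 2 := Finset.card_nsmul_le_sum _ _ _ hjmin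
    have e1 : ∑ i ∈ I ∩ Λ, r i ^ 2 + ∑ i ∈ I \ Λ, r i ^ 2 = T :=
      Finset.sum_inter_add_sum_sdiff I Λ _
    have e2 : ∑ i ∈ Λ ∩ I, r i ^ 2 + ∑ i ∈ Λ \ I, r i ^ 2 = ∑ i ∈ Λ, r i ^ 2 :=
      Finset.sum_inter_add_sum_sdiff Λ I _
    rw [Finset.inter_comm] at e2
    linarith
  -- the defining set of Th is nonempty and bounded below
  have hSetNe : ∀ β : Fin n → ℝ,
      {s : ℝ | ∃ Λ : Finset (Fin n), Λ.card = h ∧ s = ∑ i ∈ Λ, β i ^ 2}.Nonempty := by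
    intro β
    obtain ⟨Λ0, _, hΛ0⟩ := Finset.exists_subset_card_eq
      (show h ≤ (Finset.univ : Finset (Fin n)).card by simpa using hhn)
    exact ⟨_, Λ0, hΛ0, rfl⟩
  have hBdd : ∀ β : Fin n → ℝ,
      BddBelow {s : ℝ | ∃ Λ : Finset (Fin n), Λ.card = h ∧ s = ∑ i ∈ Λ, β i ^ 2} := by
    intro β
    exact ⟨0, by rintro s ⟨Λ, -, rfl⟩; exact Finset.sum_nonneg fun i _ => sq_nonneg _⟩
  -- upper bound : objective at rstar ≤ S
  have hub : γ * Th n h rstar + (1 / 2) * ∑ i, (rstar i - r i) ^ 2 ≤ S := by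
    have hTh : Th n h rstar ≤ ∑ i ∈ I, rstar i ^ 2 :=
      csInf_le (hBdd rstar) ⟨I, hI, rfl⟩
    have e1 : ∑ i ∈ I, rstar i ^ 2 = (1 / c ^ 2) * T := by
      rw [hrstar, hT, Finset.mul_sum]
      refine Finset.sum_congr rfl fun i hi => ?_
      simp only [if_pos hi]
      field_simp
    have e2 : ∑ i, (rstar i - r i) ^ 2 = (4 * γ ^ 2 / c ^ 2) * T := by
      rw [hrstar, hT, Finset.mul_sum]
      rw [← Finset.sum_subset (Finset.subset_univ I)
        (fun i _ hi => by simp [if_neg hi])]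
      refine Finset.sum_congr rfl fun i hi => ?_
      simp only [if_pos hi]
      field_simp
      ring
    have key : γ * (1 / c ^ 2) + (1 / 2) * (4 * γ ^ 2 / c ^ 2) = γ / c := by
      field_simp
      ring
    calc γ * Th n h rstar + (1 / 2) * ∑ i, (rstar i - r i) ^ 2
        ≤ γ * ((1 / c ^ 2) * T) + (1 / 2) * ((4 * γ ^ 2 / c ^ 2) * T) := by
          rw [e2]; nlinarith [hTh, e1]
      _ = (γ * (1 / c ^ 2) + (1 / 2) * (4 * γ ^ 2 / c ^ 2)) * T := by ring
      _ = S := by rw [key, hS]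
  -- lower bound : objective at any α ≥ S
  set q : ℝ := (1 / 2) * ∑ i, (α i - r i) ^ 2 with hq
  have hmem : ∀ Λ : Finset (Fin n), Λ.card = h →
      S ≤ γ * (∑ i ∈ Λ, α i ^ 2) + q := by
    intro Λ hΛ
    have hqΛ : (1 / 2) * ∑ i ∈ Λ, (α i - r i) ^ 2 ≤ q := by
      rw [hq]
      have := Finset.sum_le_sum_of_subset_of_nonneg (Finset.subset_univ Λ)
        (fun i _ _ => sq_nonneg (α i - r i))
      linarith
    have hpt : ∀ i ∈ Λ, (γ / c) * r i ^ 2 ≤ γ * α i ^ 2 + (1 / 2) * (α i - r i) ^ 2 := by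
      intro i _
      have hrw : γ / c * r i ^ 2 = γ * r i ^ 2 / c := by ring
      rw [hrw, div_le_iff₀ hcpos, hc]
      nlinarith [sq_nonneg ((2 * γ + 1) * α i - r i), hγ.le]
    have hsum : (γ / c) * ∑ i ∈ Λ, r i ^ 2 ≤
        γ * (∑ i ∈ Λ, α i ^ 2) + (1 / 2) * ∑ i ∈ Λ, (α i - r i) ^ 2 := by
      have := Finset.sum_le_sum hpt
      rw [Finset.mul_sum]
      rw [Finset.mul_sum, Finset.mul_sum] at *
      calc ∑ i ∈ Λ, γ / c * r i ^ 2
          ≤ ∑ i ∈ Λ, (γ * α i ^ 2 + 1 / 2 * (α i - r i) ^ 2) := Finset.sum_le_sum hpt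
        _ = ∑ i ∈ Λ, γ * α i ^ 2 + ∑ i ∈ Λ, 1 / 2 * (α i - r i) ^ 2 := Finset.sum_add_distrib
        _ = _ := by rw [← Finset.mul_sum, ← Finset.mul_sum]
    have hST : S ≤ (γ / c) * ∑ i ∈ Λ, r i ^ 2 := by
      rw [hS]
      exact mul_le_mul_of_nonneg_left (hcomb Λ hΛ) (by positivity)
    linarith
  have hlb : S ≤ γ * Th n h α + q := by
    have hTh : (S - q) / γ ≤ Th n h α := by
      apply le_csInf (hSetNe α)
      rintro s ⟨Λ, hΛ, rfl⟩
      rw [div_le_iff₀ hγ]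
      have := hmem Λ hΛ
      linarith [mul_comm (∑ i ∈ Λ, α i ^ 2) γ]
    rw [div_le_iff₀ hγ] at hTh
    nlinarith
  calc γ * Th n h rstar + (1 / 2) * ∑ i, (rstar i - r i) ^ 2 ≤ S := hub
    _ ≤ γ * Th n h α + (1 / 2) * ∑ i, (α i - r i) ^ 2 := hlb
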